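/- Let F be a continuous, piecewise C^1 function on [a,b] with breakpoints a = x₀ < x₁ < ... < x_{k+1} = b, such that on each (x_i, x_{i+1}) the one-sided derivatives satisfy F'(x_i⁺) = ρ_i F'(x_i⁻) with ρ_i > 0 at each interior breakpoint. If F(c) = F(d) = 0 for some a ≤ c < d ≤ b, then there exists ξ ∈ (c,d) with F'(ξ⁻) = 0 or F'(ξ⁺) = 0 or F'(ξ) changes sign at ξ. -/

import Mathlib

open Set Filter Topology

/-- At a point of (c,d) where F attains its max on [c,d], the left derivative is ≥ 0. -/
lemma left_deriv_nonneg_at_max (F : ℝ → ℝ) (c d ξ : ℝ) (hξ : ξ ∈ Set.Ioo c d)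
    (hmax : ∀ y ∈ Set.Icc c d, F y ≤ F ξ)
    (hL : DifferentiableWithinAt ℝ F (Set.Iic ξ) ξ) :
    0 ≤ derivWithin F (Set.Iic ξ) ξ := by
  have h := hL.hasDerivWithinAt
  rw [hasDerivWithinAt_iff_tendsto_slope] at h
  have hset : Set.Iic ξ \ {ξ} = Set.Iio ξ := by
    ext y; simp [lt_iff_le_and_ne]
  rw [hset] at h
  refine ge_of_tendsto h ?_
  filter_upwards [Ioo_mem_nhdsLT_of_mem (show ξ ∈ Set.Ioc c ξ from ⟨hξ.1, le_rfl⟩)]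
    with y hy
  have hy1 : c < y := hy.1
  have hy2 : y < ξ := hy.2
  have hFy : F y ≤ F ξ := hmax y ⟨hy1.le, hy2.le.trans hξ.2.le⟩
  rw [slope_def_field]
  exact div_nonneg_iff.mpr (Or.inr ⟨by linarith, by linarith⟩)

/-- At a point of (c,d) where F attains its max on [c,d], the right derivative is ≤ 0. -/
lemma right_deriv_nonpos_at_max (F : ℝ → ℝ) (c d ξ : ℝ) (hξ : ξ ∈ Set.Ioo c d)
    (hmax : ∀ y ∈ Set.Icc c d, F y ≤ F ξ)
    (hR : DifferentiableWithinAt ℝ F (Set.Ici ξ) ξ) :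
    derivWithin F (Set.Ici ξ) ξ ≤ 0 := by
  have h := hR.hasDerivWithinAt
  rw [hasDerivWithinAt_iff_tendsto_slope] at h
  have hset : Set.Ici ξ \ {ξ} = Set.Ioi ξ := by
    ext y; simp [lt_iff_le_and_ne, eq_comm]
  rw [hset] at h
  refine le_of_tendsto h ?_
  filter_upwards [Ioo_mem_nhdsGT_of_mem (show ξ ∈ Set.Ico ξ d from ⟨le_rfl, hξ.2⟩)]
    with y hy
  have hy1 : ξ < y := hy.1
  have hy2 : y < d := hy.2
  have hFy : F y ≤ F ξ := hmax y ⟨hξ.1.le.trans hy1.le, hy2.le⟩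
  rw [slope_def_field]
  exact div_nonpos_of_nonpos_of_nonneg (by linarith) (by linarith)

/-- The key Rolle-type lemma, assuming one-sided differentiability on the interior
and the existence of a point where F is positive. -/
lemma rolle_aux (F : ℝ → ℝ) (c d : ℝ) (hcd : c < d)
    (hdiff : ∀ ξ ∈ Set.Ioo c d,
      DifferentiableWithinAt ℝ F (Set.Iic ξ) ξ ∧ DifferentiableWithinAt ℝ F (Set.Ici ξ) ξ)
    (hcont : ContinuousOn F (Set.Icc c d)) (hFc : F c = 0) (hFd : F d = 0)
    (t : ℝ) (ht : t ∈ Set.Ioo c d) (hFt : 0 < F t) :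
    ∃ ξ ∈ Set.Ioo c d,
      derivWithin F (Set.Iic ξ) ξ = 0 ∨ derivWithin F (Set.Ici ξ) ξ = 0 ∨
      derivWithin F (Set.Iic ξ) ξ * derivWithin F (Set.Ici ξ) ξ < 0 := by
  obtain ⟨ξ, hξmem, hmax⟩ :=
    isCompact_Icc.exists_isMaxOn (Set.nonempty_Icc.2 hcd.le) hcont
  have hmax' : ∀ y ∈ Set.Icc c d, F y ≤ F ξ := fun y hy => hmax hy
  have hFξ : 0 < F ξ := hFt.trans_le (hmax' t ⟨ht.1.le, ht.2.le⟩)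
  have hξc : ξ ≠ c := fun h => by rw [h, hFc] at hFξ; exact lt_irrefl 0 hFξ
  have hξd : ξ ≠ d := fun h => by rw [h, hFd] at hFξ; exact lt_irrefl 0 hFξ
  have hξIoo : ξ ∈ Set.Ioo c d := ⟨lt_of_le_of_ne hξmem.1 (Ne.symm hξc), lt_of_le_of_ne hξmem.2 hξd⟩
  obtain ⟨hL, hR⟩ := hdiff ξ hξIoo
  have hp : 0 ≤ derivWithin F (Set.Iic ξ) ξ := left_deriv_nonneg_at_max F c d ξ hξIoo hmax' hL
  have hq : derivWithin F (Set.Ici ξ) ξ ≤ 0 := right_deriv_nonpos_at_max F c d ξ hξIoo hmax' hR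
  refine ⟨ξ, hξIoo, ?_⟩
  rcases eq_or_lt_of_le hp with hp0 | hp0
  · exact Or.inl hp0.symm
  rcases eq_or_lt_of_le hq with hq0 | hq0
  · exact Or.inr (Or.inl hq0)
  exact Or.inr (Or.inr (mul_neg_of_pos_of_neg hp0 hq0))

theorem stmt_14 (a b : ℝ) (hab : a < b) (k : ℕ)
    (x : ℕ → ℝ) (hx0 : x 0 = a) (hxk : x (k + 1) = b)
    (hxmono : ∀ i ≤ k, x i < x (i + 1))
    (F : ℝ → ℝ)
    (hFcont : ContinuousOn F (Set.Icc a b))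
    (hFC1 : ∀ i ≤ k, ContDiffOn ℝ 1 F (Set.Icc (x i) (x (i + 1))))
    (ρ : ℕ → ℝ) (hρ : ∀ i, 1 ≤ i → i ≤ k → 0 < ρ i)
    (hconn : ∀ i, 1 ≤ i → i ≤ k →
      derivWithin F (Set.Ici (x i)) (x i) = ρ i * derivWithin F (Set.Iic (x i)) (x i))
    (c d : ℝ) (hc : a ≤ c) (hcd : c < d) (hd : d ≤ b)
    (hFc : F c = 0) (hFd : F d = 0) :
    ∃ ξ ∈ Set.Ioo c d,
      derivWithin F (Set.Iic ξ) ξ = 0 ∨ derivWithin F (Set.Ici ξ) ξ = 0 ∨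
      derivWithin F (Set.Iic ξ) ξ * derivWithin F (Set.Ici ξ) ξ < 0 := by
  -- one-sided differentiability at every interior point of [a,b]
  have hdiff : ∀ ξ ∈ Set.Ioo a b,
      DifferentiableWithinAt ℝ F (Set.Iic ξ) ξ ∧ DifferentiableWithinAt ℝ F (Set.Ici ξ) ξ := by
    intro ξ hξ
    -- find the interval containing ξ
    set P : ℕ → Prop := fun i => x i ≤ ξ with hP
    have hP0 : P 0 := by rw [hP]; simp [hx0, hξ.1.le]
    set i := Nat.findGreatest P k with hi
    have hik : i ≤ k := Nat.findGreatest_le k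
    have hPi : P i := Nat.findGreatest_spec (Nat.zero_le k) hP0
    have hub : ξ < x (i + 1) := by
      rcases lt_or_ge i k with hlt | hge
      · by_contra h
        push_neg at h
        exact Nat.findGreatest_is_greatest (Nat.lt_succ_self i)
          (Nat.succ_le_of_lt hlt) h
      · have : i = k := le_antisymm hik hge
        rw [this, hxk]; exact hξ.2
    have hdiffIcc : DifferentiableWithinAt ℝ F (Set.Icc (x i) (x (i + 1))) ξ :=
      ((hFC1 i hik).differentiableOn one_ne_zero) ξ ⟨hPi, hub.le⟩
    rcases eq_or_lt_of_le (hPi : x i ≤ ξ) with heq | hlt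
    · -- ξ = x i is a breakpoint; i ≥ 1
      have hi1 : 1 ≤ i := by
        rcases Nat.eq_zero_or_pos i with h0 | h1
        · exfalso; rw [h0, hx0] at heq; exact absurd heq.symm (ne_of_gt hξ.1)
        · exact h1
      constructor
      · -- left: use piece i-1
        have hi1k : i - 1 ≤ k := le_trans (Nat.sub_le i 1) hik
        have hsucc : i - 1 + 1 = i := Nat.succ_pred_eq_of_pos hi1
        have hxlt : x (i - 1) < x i := by
          have := hxmono (i - 1) hi1k
          rwa [hsucc] at this
        have hdl : DifferentiableWithinAt ℝ F
            (Set.Icc (x (i - 1)) (x (i - 1 + 1))) ξ :=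
          ((hFC1 (i - 1) hi1k).differentiableOn one_ne_zero) ξ
            ⟨heq ▸ hxlt.le, by rw [hsucc]; exact heq.ge⟩
        rw [hsucc] at hdl
        apply hdl.mono_of_mem_nhdsWithin
        have hxlt' : x (i - 1) < ξ := heq ▸ hxlt
        refine Filter.mem_of_superset
          (inter_mem_nhdsWithin _ (Ioi_mem_nhds hxlt')) ?_
        intro y hy
        exact ⟨hy.2.le, heq ▸ hy.1⟩
      · -- right: use piece i
        apply hdiffIcc.mono_of_mem_nhdsWithin
        have : Set.Ici ξ ∩ Set.Iio (x (i + 1)) ⊆ Set.Icc (x i) (x (i + 1)) := by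
          intro y hy; exact ⟨heq.le.trans hy.1, hy.2.le⟩
        exact Filter.mem_of_superset
          (inter_mem_nhdsWithin _ (Iio_mem_nhds hub)) (by
            intro y hy; exact ⟨heq.le.trans hy.1, hy.2.le⟩)
    · -- x i < ξ < x (i+1): interior point
      have hda : DifferentiableAt ℝ F ξ :=
        hdiffIcc.differentiableAt (Icc_mem_nhds hlt hub)
      exact ⟨hda.differentiableWithinAt, hda.differentiableWithinAt⟩
  by_cases hzero : ∀ t ∈ Set.Ioo c d, F t = 0
  · -- F vanishes on (c,d): the derivative at the midpoint is 0
    set ξ := (c + d) / 2 with hξdef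
    have hξIoo : ξ ∈ Set.Ioo c d := ⟨by rw [hξdef]; linarith, by rw [hξdef]; linarith⟩
    refine ⟨ξ, hξIoo, Or.inl ?_⟩
    have hev : F =ᶠ[𝓝[Set.Iic ξ] ξ] fun _ => 0 := by
      filter_upwards [inter_mem_nhdsWithin (Set.Iic ξ) (Ioo_mem_nhds hξIoo.1 hξIoo.2)]
        with y hy
      exact hzero y hy.2
    have hξ0 : F ξ = 0 := hzero ξ hξIoo
    calc derivWithin F (Set.Iic ξ) ξ = derivWithin (fun _ => (0:ℝ)) (Set.Iic ξ) ξ :=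
          hev.derivWithin_eq hξ0
      _ = 0 := by simp
  · push_neg at hzero
    obtain ⟨t, ht, hFt⟩ := hzero
    have hIoosub : Set.Ioo c d ⊆ Set.Ioo a b := fun y hy =>
      ⟨lt_of_le_of_lt hc hy.1, lt_of_lt_of_le hy.2 hd⟩
    have hdiff' : ∀ ξ ∈ Set.Ioo c d,
        DifferentiableWithinAt ℝ F (Set.Iic ξ) ξ ∧ DifferentiableWithinAt ℝ F (Set.Ici ξ) ξ :=
      fun ξ hξ => hdiff ξ (hIoosub hξ)
    have hcont' : ContinuousOn F (Set.Icc c d) :=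
      hFcont.mono (Set.Icc_subset_Icc hc hd)
    rcases lt_or_gt_of_ne hFt with hneg | hpos
    · -- F t < 0: apply the lemma to -F
      have hdiffneg : ∀ ξ ∈ Set.Ioo c d,
          DifferentiableWithinAt ℝ (fun y => -F y) (Set.Iic ξ) ξ ∧
          DifferentiableWithinAt ℝ (fun y => -F y) (Set.Ici ξ) ξ :=
        fun ξ hξ => ⟨(hdiff' ξ hξ).1.neg, (hdiff' ξ hξ).2.neg⟩
      obtain ⟨ξ, hξIoo, hcase⟩ := rolle_aux (fun y => -F y) c d hcd hdiffneg
        (hcont'.neg) (by simp [hFc]) (by simp [hFd]) t ht (show (0:ℝ) < -F t by linarith)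
      have huL : UniqueDiffWithinAt ℝ (Set.Iic ξ) ξ := uniqueDiffOn_Iic ξ ξ Set.self_mem_Iic
      have huR : UniqueDiffWithinAt ℝ (Set.Ici ξ) ξ := uniqueDiffOn_Ici ξ ξ Set.self_mem_Ici
      have hnegL : derivWithin (fun y => -F y) (Set.Iic ξ) ξ = -derivWithin F (Set.Iic ξ) ξ :=
        derivWithin.neg
      have hnegR : derivWithin (fun y => -F y) (Set.Ici ξ) ξ = -derivWithin F (Set.Ici ξ) ξ :=
        derivWithin.neg
      rw [hnegL, hnegR] at hcase
      refine ⟨ξ, hξIoo, ?_⟩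
      rcases hcase with h | h | h
      · exact Or.inl (neg_eq_zero.mp h)
      · exact Or.inr (Or.inl (neg_eq_zero.mp h))
      · exact Or.inr (Or.inr (by nlinarith))
    · exact rolle_aux F c d hcd hdiff' hcont' hFc hFd t ht hpos
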